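/- The Kummer transformation holds: for all a ∈ ℂ, positive integer n, and x ∈ ℂ, the confluent hypergeometric function satisfies ₁F₁(a, n; x) = eˣ · ₁F₁(n − a, n; −x), where ₁F₁(a,c;s) = Σ_{k≥0} ((a)ₖ/(c)ₖ) sᵏ/k! with (a)ₖ the Pochhammer symbol. -/

import Mathlib

open Complex
open Finset


noncomputable def P (k : ℕ) (y : ℂ) : ℂ := (ascPochhammer ℂ k).eval y

lemma P_zero (y : ℂ) : P 0 y = 1 := by simp [P]

lemma P_succ_right (k : ℕ) (y : ℂ) : P (k+1) y = P k y * (y + k) :=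
  ascPochhammer_succ_eval k y

lemma P_succ_left (k : ℕ) (y : ℂ) : P (k+1) y = y * P k (y + 1) := by
  simp [P, ascPochhammer_succ_left, Polynomial.eval_comp]

lemma P_ne_zero {c : ℂ} (hc : ∀ m : ℕ, c + (m:ℂ) ≠ 0) (k : ℕ) : P k c ≠ 0 := by
  induction k with
  | zero => simp [P_zero]
  | succ k ih => rw [P_succ_right]; exact mul_ne_zero ih (hc k)

lemma chu (k : ℕ) : ∀ a c : ℂ, (∀ m : ℕ, c + (m:ℂ) ≠ 0) →
    ∑ j ∈ range (k+1), (-1)^j * (k.choose j : ℂ) * (P j (c - a) / P j c)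
      = P k a / P k c := by
  induction k with
  | zero => intro a c _; simp [P_zero]
  | succ k ih =>
    intro a c hc
    have hc' : ∀ m : ℕ, (c + 1) + (m:ℂ) ≠ 0 := by
      intro m; have := hc (m+1); push_cast at this; rwa [add_assoc, add_comm (1:ℂ)]
    have hc0 : c ≠ 0 := by simpa using hc 0
    have key : ∀ j : ℕ, P (j+1) (c-a) / P (j+1) c
        = P j (c-a)/P j c - a/c * (P j (c-a) / P j (c+1)) := by
      intro j
      have h1 : P (j+1) c = P j c * (c + j) := P_succ_right ..
      have h2 : P (j+1) c = c * P j (c+1) := P_succ_left ..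
      have h3 : P (j+1) (c-a) = P j (c-a) * (c - a + j) := P_succ_right ..
      have hPc : P j c ≠ 0 := P_ne_zero hc j
      have hPc1 : P j (c+1) ≠ 0 := P_ne_zero hc' j
      have hcj : c + (j:ℂ) ≠ 0 := hc j
      have hcp : c * P j (c+1) = P j c * (c + j) := by rw [← h2, h1]
      have e1 : a / c * (P j (c-a) / P j (c+1)) = a * P j (c-a) / (P j c * (c+(j:ℂ))) := by
        rw [div_mul_div_comm, ← hcp]
      rw [h3, h1, e1]
      field_simp
      ring
    have hsplit : ∑ j ∈ range (k+1+1), (-1:ℂ)^j * ((k+1).choose j : ℂ) * (P j (c - a) / P j c)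
        = (∑ j ∈ range (k+1), (-1:ℂ)^(j+1) * ((k+1).choose (j+1) : ℂ) * (P (j+1) (c-a) / P (j+1) c)) + 1 := by
      rw [Finset.sum_range_succ' (fun j => (-1:ℂ)^j * ((k+1).choose j : ℂ) * (P j (c - a) / P j c)) (k+1)]
      simp [P_zero]
    have hg : ∑ j ∈ range (k+1), (-1:ℂ)^(j+1) * ((k+1).choose (j+1) : ℂ) * (P (j+1) (c-a) / P (j+1) c)
        = (∑ j ∈ range (k+1), (-1:ℂ)^(j+1) * (k.choose (j+1) : ℂ) * (P (j+1) (c-a) / P (j+1) c))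
          - (∑ j ∈ range (k+1), (-1:ℂ)^j * (k.choose j : ℂ) * (P j (c-a) / P j c))
          + a/c * ∑ j ∈ range (k+1), (-1:ℂ)^j * (k.choose j : ℂ) * (P j (c-a) / P j (c+1)) := by
      rw [Finset.mul_sum, ← Finset.sum_sub_distrib, ← Finset.sum_add_distrib]
      apply Finset.sum_congr rfl
      intro j _
      rw [key j, Nat.choose_succ_succ]
      push_cast
      ring
    have hA : (∑ j ∈ range (k+1), (-1:ℂ)^(j+1) * (k.choose (j+1) : ℂ) * (P (j+1) (c-a) / P (j+1) c)) + 1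
        = ∑ j ∈ range (k+1), (-1:ℂ)^j * (k.choose j : ℂ) * (P j (c-a) / P j c) := by
      have h2 : ∑ j ∈ range (k+1+1), (-1:ℂ)^j * (k.choose j : ℂ) * (P j (c-a) / P j c)
          = (∑ j ∈ range (k+1), (-1:ℂ)^(j+1) * (k.choose (j+1) : ℂ) * (P (j+1) (c-a) / P (j+1) c)) + 1 := by
        rw [Finset.sum_range_succ' (fun j => (-1:ℂ)^j * (k.choose j : ℂ) * (P j (c - a) / P j c)) (k+1)]
        simp [P_zero]
      rw [← h2, Finset.sum_range_succ]
      simp [Nat.choose_succ_self]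
    have hu : ∑ j ∈ range (k+1), (-1:ℂ)^j * (k.choose j : ℂ) * (P j (c-a) / P j (c+1))
        = P k (a+1) / P k (c+1) := by
      have := ih (a+1) (c+1) hc'
      simpa using this
    rw [hsplit, hg, hu, ih a c hc]
    rw [ih a c hc] at hA
    have hPk1 : P k (c+1) ≠ 0 := P_ne_zero hc' k
    have hPkc : P k c ≠ 0 := P_ne_zero hc k
    have final : a/c * (P k (a+1) / P k (c+1)) = P (k+1) a / P (k+1) c := by
      rw [P_succ_left k a, P_succ_left k c]
      field_simp
    linear_combination hA + final

lemma P_def (k : ℕ) (y : ℂ) : (ascPochhammer ℂ k).eval y = P k y := rfl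

lemma ratio_rel (a : ℂ) {n : ℕ} (hn : 1 ≤ n) (s : ℂ)
    (hcN : ∀ m : ℕ, (n:ℂ) + (m:ℂ) ≠ 0) (k : ℕ) :
    P (k+1) a / P (k+1) (n:ℂ) * s ^ (k+1) / (k+1).factorial
      = (P k a / P k (n:ℂ) * s ^ k / k.factorial) * ((a + k) * s / (((n:ℂ) + k) * (k+1))) := by
  have hPn : P k (n:ℂ) ≠ 0 := P_ne_zero hcN k
  have hnk : (n:ℂ) + k ≠ 0 := hcN k
  have hfac : ((k.factorial : ℂ)) ≠ 0 := by exact_mod_cast k.factorial_ne_zero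
  have hk1 : ((k:ℂ) + 1) ≠ 0 := Nat.cast_add_one_ne_zero k
  rw [P_succ_right, P_succ_right]
  have hfs : ((k+1).factorial : ℂ) = (k.factorial : ℂ) * ((k:ℂ)+1) := by
    push_cast [Nat.factorial_succ]; ring
  rw [hfs]
  field_simp
  ring

lemma summable_norm_term (a : ℂ) {n : ℕ} (hn : 1 ≤ n) (s : ℂ) :
    Summable (fun k : ℕ => ‖P k a / P k (n:ℂ) * s ^ k / k.factorial‖) := by
  have hcN : ∀ m : ℕ, (n:ℂ) + (m:ℂ) ≠ 0 := by
    intro m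
    have : ((n + m : ℕ) : ℂ) ≠ 0 := by
      rw [Nat.cast_ne_zero]; omega
    push_cast at this; exact this
  apply summable_of_ratio_norm_eventually_le (r := 1/2) (by norm_num)
  have hK : ∀ᶠ k : ℕ in Filter.atTop, ‖(a + k) * s / (((n:ℂ) + k) * ((k:ℂ)+1))‖ ≤ 1/2 := by
    rw [Filter.eventually_atTop]
    refine ⟨⌈‖a‖⌉₊ + ⌈4*‖s‖⌉₊ + 1, fun k hk => ?_⟩
    have ha : ‖a‖ ≤ (k:ℝ) := le_trans (Nat.le_ceil _) (by exact_mod_cast le_trans (by omega) hk)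
    have hs : 4*‖s‖ ≤ (k:ℝ) := le_trans (Nat.le_ceil _) (by exact_mod_cast le_trans (by omega) hk)
    have h1 : ‖a + (k:ℂ)‖ ≤ 2*(k:ℝ) := by
      calc ‖a + (k:ℂ)‖ ≤ ‖a‖ + ‖(k:ℂ)‖ := norm_add_le _ _
        _ = ‖a‖ + k := by rw [Complex.norm_natCast]
        _ ≤ 2*(k:ℝ) := by linarith
    have h2 : ((k:ℝ)+1) ≤ ‖(n:ℂ) + (k:ℂ)‖ := by
      have : ((n:ℂ) + (k:ℂ)) = ((n + k : ℕ) : ℂ) := by push_cast; ring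
      rw [this, Complex.norm_natCast]
      have : (1:ℝ) ≤ (n:ℝ) := by exact_mod_cast hn
      push_cast; linarith
    rw [norm_div, norm_mul, norm_mul]
    have hk3 : ‖(k:ℂ)+1‖ = (k:ℝ)+1 := by
      rw [show ((k:ℂ)+1) = ((k+1:ℕ):ℂ) by push_cast; ring, Complex.norm_natCast]; push_cast; ring
    rw [hk3]
    have hkpos : (0:ℝ) < (k:ℝ) + 1 := by positivity
    have hden : (0:ℝ) < ‖(n:ℂ) + (k:ℂ)‖ * ((k:ℝ)+1) := by
      apply mul_pos (lt_of_lt_of_le hkpos h2) hkpos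
    rw [div_le_iff₀ hden]
    have hns : ‖s‖ ≥ 0 := norm_nonneg s
    nlinarith [norm_nonneg (a + (k:ℂ)), mul_le_mul h1 (le_refl ‖s‖) hns (by positivity : (0:ℝ) ≤ 2*(k:ℝ)),
      mul_le_mul h2 (le_refl ((k:ℝ)+1)) (le_of_lt hkpos) (norm_nonneg _)]
  filter_upwards [hK] with k hk
  rw [norm_norm, norm_norm, ratio_rel a hn s hcN k, norm_mul]
  calc ‖P k a / P k (n:ℂ) * s ^ k / k.factorial‖ * ‖(a + k) * s / (((n:ℂ) + k) * ((k:ℂ)+1))‖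
      ≤ ‖P k a / P k (n:ℂ) * s ^ k / k.factorial‖ * (1/2) :=
        mul_le_mul_of_nonneg_left hk (norm_nonneg _)
    _ = 1/2 * ‖P k a / P k (n:ℂ) * s ^ k / k.factorial‖ := by ring

/-- The confluent hypergeometric function
`₁F₁(a,c;s) = Σ_{k≥0} (a)ₖ/(c)ₖ · sᵏ/k!`, with `(a)ₖ` the Pochhammer symbol. -/
noncomputable def oneFone (a c s : ℂ) : ℂ :=
  ∑' k : ℕ, ((ascPochhammer ℂ k).eval a / (ascPochhammer ℂ k).eval c) * s ^ k / k.factorial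

/-- The Kummer transformation: `₁F₁(a, n; x) = eˣ · ₁F₁(n − a, n; −x)` for all
`a ∈ ℂ`, positive integers `n` and `x ∈ ℂ`. -/
theorem kummer_transformation (a : ℂ) (n : ℕ) (hn : 1 ≤ n) (x : ℂ) :
    oneFone a n x = Complex.exp x * oneFone ((n : ℂ) - a) n (-x) := by
  have hcN : ∀ m : ℕ, (n:ℂ) + (m:ℂ) ≠ 0 := by
    intro m
    have : ((n + m : ℕ) : ℂ) ≠ 0 := by rw [Nat.cast_ne_zero]; omega
    push_cast at this; exact this
  have hexp : Summable (fun m : ℕ => ‖x ^ m / (m.factorial : ℂ)‖) := by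
    have h : ∀ m : ℕ, ‖x ^ m / (m.factorial : ℂ)‖ = ‖x‖ ^ m / m.factorial := by
      intro m; rw [norm_div, norm_pow, Complex.norm_natCast]
    simpa [h] using Real.summable_pow_div_factorial ‖x‖
  have hg : Summable (fun k : ℕ => ‖P k ((n:ℂ) - a) / P k (n:ℂ) * (-x) ^ k / k.factorial‖) :=
    summable_norm_term _ hn _
  unfold oneFone
  simp only [P_def]
  rw [show Complex.exp x = ∑' m : ℕ, x ^ m / (m.factorial : ℂ) by
    rw [Complex.exp_eq_exp_ℂ, NormedSpace.exp_eq_tsum_div]]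
  rw [tsum_mul_tsum_eq_tsum_sum_antidiagonal_of_summable_norm hexp hg]
  refine tsum_congr fun k => ?_
  rw [Finset.Nat.sum_antidiagonal_eq_sum_range_succ_mk]
  rw [← Finset.sum_range_reflect]
  rw [← chu k a (n:ℂ) hcN, Finset.sum_mul, Finset.sum_div]
  refine Finset.sum_congr rfl fun j hj => ?_
  have hjk : j ≤ k := by simpa [Nat.lt_succ_iff] using Finset.mem_range.mp hj
  simp only [Nat.succ_sub_one, Nat.add_sub_cancel, Nat.sub_sub_self hjk]
  have hx : x ^ (k - j) * x ^ j = x ^ k := by rw [← pow_add, Nat.sub_add_cancel hjk]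
  have hch : (k.choose j : ℂ) * (j.factorial:ℂ) * ((k-j).factorial:ℂ) = (k.factorial:ℂ) := by
    exact_mod_cast Nat.choose_mul_factorial_mul_factorial hjk
  have hf1 : ((j.factorial:ℂ)) ≠ 0 := by exact_mod_cast j.factorial_ne_zero
  have hf2 : (((k-j).factorial:ℂ)) ≠ 0 := by exact_mod_cast (k-j).factorial_ne_zero
  have hf3 : ((k.factorial:ℂ)) ≠ 0 := by exact_mod_cast k.factorial_ne_zero
  have hPn : P j (n:ℂ) ≠ 0 := P_ne_zero hcN j
  rw [neg_pow]
  field_simp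
  linear_combination (-1:ℂ)^j * P j ((n:ℂ)-a) * (x^k * hch - (k.factorial:ℂ) * hx)
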